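/- (Kac's lemma) Let π be the stationary distribution of an irreducible positive-recurrent Markov chain on a countable state space V. Then for any nonempty S ⊆ V, the mean return time τ_S = (Σ_{i∈S} π_i τ⁺_{i→S}) / (Σ_{i∈S} π_i) satisfies τ_S = 1 / Σ_{i∈S} π_i; in particular τ_i = 1/π_i for every i ∈ V. -/

import Mathlib

open scoped ENNReal Classical
open Filter Topology

/-- `hitBy P S n i = P(T_S ≤ n | Y_0 = i)` for a Markov chain with transition matrix `P`. -/
noncomputable def hitBy {V : Type*} (P : V → V → ℝ≥0∞) (S : Set V) : ℕ → V → ℝ≥0∞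
  | 0, i => if i ∈ S then 1 else 0
  | n + 1, i => if i ∈ S then 1 else ∑' j, P i j * hitBy P S n j

/-- The mean hitting time `τ_{i→S} = E[T_S | Y_0 = i]`. -/
noncomputable def meanHit {V : Type*} (P : V → V → ℝ≥0∞) (S : Set V) (i : V) : ℝ≥0∞ :=
  ∑' n, (1 - hitBy P S n i)

/-- The mean return time `τ⁺_{i→S} = E[T⁺_S | Y_0 = i] = 1 + ∑_j P_{ij} τ_{j→S}`. -/
noncomputable def returnTime {V : Type*} (P : V → V → ℝ≥0∞) (S : Set V) (i : V) : ℝ≥0∞ :=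
  1 + ∑' j, P i j * meanHit P S j

namespace KacAux

variable {V : Type*}

lemma hitBy_of_mem (P : V → V → ℝ≥0∞) {S : Set V} {i : V} (h : i ∈ S) :
    ∀ n, hitBy P S n i = 1
  | 0 => by simp [hitBy, h]
  | n + 1 => by simp [hitBy, h]

lemma hitBy_le_one (P : V → V → ℝ≥0∞) (hst : ∀ i, ∑' j, P i j = 1) (S : Set V) :
    ∀ n i, hitBy P S n i ≤ 1
  | 0, i => by simp only [hitBy]; split <;> simp
  | n + 1, i => by
    simp only [hitBy]; split
    · exact le_rfl
    · calc ∑' j, P i j * hitBy P S n j ≤ ∑' j, P i j * 1 :=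
          ENNReal.tsum_le_tsum fun j => mul_le_mul_right (hitBy_le_one P hst S n j) _
        _ = 1 := by simpa using hst i

lemma hitBy_mono (P : V → V → ℝ≥0∞) (hst : ∀ i, ∑' j, P i j = 1) {S T : Set V}
    (hST : S ⊆ T) : ∀ n i, hitBy P S n i ≤ hitBy P T n i
  | 0, i => by
    simp only [hitBy]
    by_cases h : i ∈ S
    · rw [if_pos h, if_pos (hST h)]
    · rw [if_neg h]; exact zero_le
  | n + 1, i => by
    simp only [hitBy]
    by_cases h : i ∈ S
    · rw [if_pos h, if_pos (hST h)]
    · rw [if_neg h]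
      by_cases h' : i ∈ T
      · rw [if_pos h']
        calc ∑' j, P i j * hitBy P S n j ≤ ∑' j, P i j * 1 :=
            ENNReal.tsum_le_tsum fun j => mul_le_mul_right (hitBy_le_one P hst S n j) _
          _ = 1 := by simpa using hst i
      · rw [if_neg h']
        exact ENNReal.tsum_le_tsum fun j => mul_le_mul_right (hitBy_mono P hst hST n j) _

/-- The survival-probability recursion: for `j ∉ S`,
`P(T_S > n+1 | Y_0 = j) = ∑_k P_{jk} P(T_S > n | Y_0 = k)`. -/
lemma surv_rec (P : V → V → ℝ≥0∞) (hst : ∀ i, ∑' j, P i j = 1) (S : Set V)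
    {j : V} (hj : j ∉ S) (n : ℕ) :
    1 - hitBy P S (n + 1) j = ∑' k, P j k * (1 - hitBy P S n k) := by
  have hB : ∑' k, P j k * hitBy P S n k ≤ 1 := by
    calc ∑' k, P j k * hitBy P S n k ≤ ∑' k, P j k * 1 :=
        ENNReal.tsum_le_tsum fun k => mul_le_mul_right (hitBy_le_one P hst S n k) _
      _ = 1 := by simpa using hst j
  have hAB : (∑' k, P j k * (1 - hitBy P S n k)) + ∑' k, P j k * hitBy P S n k = 1 := by
    rw [← ENNReal.tsum_add]
    calc ∑' k, (P j k * (1 - hitBy P S n k) + P j k * hitBy P S n k)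
        = ∑' k, P j k * ((1 - hitBy P S n k) + hitBy P S n k) := by
          simp only [mul_add]
      _ = ∑' k, P j k * 1 := by
          congr 1; funext k
          rw [tsub_add_cancel_of_le (hitBy_le_one P hst S n k)]
      _ = 1 := by simpa using hst j
  have h1 : hitBy P S (n + 1) j = ∑' k, P j k * hitBy P S n k := by
    simp only [hitBy, if_neg hj]
  rw [h1]
  exact ENNReal.sub_eq_of_eq_add (ne_top_of_le_ne_top ENNReal.one_ne_top hB) hAB.symm

lemma meanHit_of_mem (P : V → V → ℝ≥0∞) {S : Set V} {i : V} (h : i ∈ S) :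
    meanHit P S i = 0 := by
  unfold meanHit
  simp [hitBy_of_mem P h]

lemma meanHit_rec (P : V → V → ℝ≥0∞) (hst : ∀ i, ∑' j, P i j = 1) (S : Set V)
    {j : V} (hj : j ∉ S) :
    meanHit P S j = 1 + ∑' k, P j k * meanHit P S k := by
  unfold meanHit
  rw [tsum_eq_zero_add' ENNReal.summable]
  congr 1
  · simp [hitBy, if_neg hj]
  · calc ∑' n, (1 - hitBy P S (n + 1) j)
        = ∑' n, ∑' k, P j k * (1 - hitBy P S n k) := by
          congr 1; funext n; exact surv_rec P hst S hj n
      _ = ∑' k, ∑' n, P j k * (1 - hitBy P S n k) := ENNReal.tsum_comm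
      _ = ∑' k, P j k * ∑' n, (1 - hitBy P S n k) := by
          congr 1; funext k; exact ENNReal.tsum_mul_left

lemma meanHit_mono (P : V → V → ℝ≥0∞) (hst : ∀ i, ∑' j, P i j = 1) {S T : Set V}
    (hST : S ⊆ T) (j : V) : meanHit P T j ≤ meanHit P S j :=
  ENNReal.tsum_le_tsum fun n => tsub_le_tsub_left (hitBy_mono P hst hST n j) 1

/-- Finiteness of mean hitting times of a singleton, propagated along paths from `i`. -/
lemma meanHit_single_ne_top (P : V → V → ℝ≥0∞) (hst : ∀ i, ∑' j, P i j = 1)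
    (hirr : ∀ i j : V, Relation.ReflTransGen (fun a b => 0 < P a b) i j)
    (hposrec : ∀ i, returnTime P {i} i < ⊤) (i j : V) :
    meanHit P ({i} : Set V) j ≠ ⊤ := by
  induction (hirr i j) with
  | refl => rw [meanHit_of_mem P (Set.mem_singleton i)]; exact ENNReal.zero_ne_top
  | tail hab hbc ih =>
    rename_i b c
    have hsum : ∑' k, P b k * meanHit P ({i} : Set V) k ≠ ⊤ := by
      by_cases hb : b = i
      · subst hb
        have := (hposrec b).ne
        unfold returnTime at this
        exact fun h => this (by rw [h, add_top])
      · have hrec := meanHit_rec P hst ({i} : Set V) (by simpa using hb)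
        intro h
        rw [hrec, h, add_top] at ih
        exact ih rfl
    intro hc
    apply hsum
    have hle : P b c * meanHit P ({i} : Set V) c ≤ ∑' k, P b k * meanHit P ({i} : Set V) k :=
      ENNReal.le_tsum c
    rw [hc, ENNReal.mul_top hbc.ne'] at hle
    exact top_le_iff.mp hle

/-- `u n = P_π(T_S > n)` (probability the chain avoids `S` up to time `n`). -/
noncomputable def u (P : V → V → ℝ≥0∞) (S : Set V) (π : V → ℝ≥0∞) (n : ℕ) : ℝ≥0∞ :=
  ∑' j, π j * (1 - hitBy P S n j)

/-- `c n = P_π(Y_0 ∈ S, then avoid S for n+1 more steps)`. -/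
noncomputable def c (P : V → V → ℝ≥0∞) (S : Set V) (π : V → ℝ≥0∞) (n : ℕ) : ℝ≥0∞ :=
  ∑' j : S, π (j : V) * ∑' k, P (j : V) k * (1 - hitBy P S n k)

lemma u_step (P : V → V → ℝ≥0∞) (hst : ∀ i, ∑' j, P i j = 1) (S : Set V)
    (π : V → ℝ≥0∞) (hπstat : ∀ j, ∑' i, π i * P i j = π j) (n : ℕ) :
    u P S π n = c P S π n + u P S π (n + 1) := by
  have hflow : ∑' j, π j * ∑' k, P j k * (1 - hitBy P S n k) = u P S π n := by
    calc ∑' j, π j * ∑' k, P j k * (1 - hitBy P S n k)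
        = ∑' j, ∑' k, π j * P j k * (1 - hitBy P S n k) := by
          refine tsum_congr fun j => ?_
          rw [← ENNReal.tsum_mul_left]
          exact tsum_congr fun k => (mul_assoc _ _ _).symm
      _ = ∑' k, ∑' j, π j * P j k * (1 - hitBy P S n k) := ENNReal.tsum_comm
      _ = ∑' k, (∑' j, π j * P j k) * (1 - hitBy P S n k) := by
          refine tsum_congr fun k => ?_
          rw [ENNReal.tsum_mul_right]
      _ = u P S π n := by
          refine tsum_congr fun k => ?_
          rw [hπstat k]
  have hsplit :
      ∑' j, π j * ∑' k, P j k * (1 - hitBy P S n k)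
        = (∑' j : S, π (j : V) * ∑' k, P (j : V) k * (1 - hitBy P S n k))
          + ∑' j : ↥Sᶜ, π (j : V) * ∑' k, P (j : V) k * (1 - hitBy P S n k) :=
    (Summable.tsum_add_tsum_compl (s := S)
      (f := fun j => π j * ∑' k, P j k * (1 - hitBy P S n k))
      ENNReal.summable ENNReal.summable).symm
  have hcompl :
      ∑' j : ↥Sᶜ, π (j : V) * ∑' k, P (j : V) k * (1 - hitBy P S n k) = u P S π (n + 1) := by
    have h1 : ∀ j : ↥Sᶜ, π (j : V) * ∑' k, P (j : V) k * (1 - hitBy P S n k)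
        = π (j : V) * (1 - hitBy P S (n + 1) (j : V)) := fun j => by
      rw [← surv_rec P hst S j.2]
    rw [tsum_congr h1]
    have h2 : ∑' j : S, π (j : V) * (1 - hitBy P S (n + 1) (j : V)) = 0 :=
      ENNReal.tsum_eq_zero.mpr fun j => by
        rw [hitBy_of_mem P j.2, tsub_self, mul_zero]
    have h3 := (Summable.tsum_add_tsum_compl (s := S)
      (f := fun j => π j * (1 - hitBy P S (n + 1) j)) ENNReal.summable ENNReal.summable)
    rw [h2, zero_add] at h3
    exact h3
  rw [← hflow, hsplit, hcompl]
  rfl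

lemma sum_c (P : V → V → ℝ≥0∞) (hst : ∀ i, ∑' j, P i j = 1) (S : Set V)
    (π : V → ℝ≥0∞) (hπstat : ∀ j, ∑' i, π i * P i j = π j) :
    ∀ N, (∑ n ∈ Finset.range N, c P S π n) + u P S π N = u P S π 0
  | 0 => by simp
  | N + 1 => by
    rw [Finset.sum_range_succ, add_assoc, ← u_step P hst S π hπstat N]
    exact sum_c P hst S π hπstat N

lemma u_tendsto [Countable V] (P : V → V → ℝ≥0∞) (S : Set V) (π : V → ℝ≥0∞)
    (hπtop : ∀ j, π j ≠ ⊤) (hπsum : ∑' i, π i = 1)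
    (hfin : ∀ j, meanHit P S j ≠ ⊤) :
    Tendsto (u P S π) atTop (𝓝 0) := by
  letI : MeasurableSpace V := ⊤
  haveI : MeasurableSingletonClass V := ⟨fun _ => trivial⟩
  have key := MeasureTheory.tendsto_lintegral_of_dominated_convergence
    (μ := MeasureTheory.Measure.count)
    (F := fun n j => π j * (1 - hitBy P S n j)) (f := fun _ => 0) π
    (fun _ => measurable_of_countable _)
    (fun n => Filter.Eventually.of_forall fun j => by
      calc π j * (1 - hitBy P S n j) ≤ π j * 1 := mul_le_mul_right tsub_le_self _
        _ = π j := mul_one _)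
    (by rw [MeasureTheory.lintegral_count, hπsum]; exact ENNReal.one_ne_top)
    (Filter.Eventually.of_forall fun j => by
      have ha : Tendsto (fun n => 1 - hitBy P S n j) atTop (𝓝 0) :=
        ENNReal.tendsto_atTop_zero_of_tsum_ne_top (hfin j)
      simpa using ENNReal.Tendsto.const_mul ha (Or.inr (hπtop j)))
  have hz : ∫⁻ _, (0 : ℝ≥0∞) ∂(MeasureTheory.Measure.count (α := V)) = 0 :=
    MeasureTheory.lintegral_zero
  rw [hz] at key
  have heq : (fun n => ∫⁻ j, π j * (1 - hitBy P S n j) ∂MeasureTheory.Measure.count)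
      = u P S π := by
    funext n
    rw [MeasureTheory.lintegral_count]
    rfl
  rwa [heq] at key

/-- The heart of Kac's lemma: `∑_{i∈S} π_i τ⁺_{i→S} = 1`. -/
lemma key_lemma [Countable V] (P : V → V → ℝ≥0∞) (hst : ∀ i, ∑' j, P i j = 1)
    (S : Set V) (π : V → ℝ≥0∞) (hπtop : ∀ j, π j ≠ ⊤) (hπsum : ∑' i, π i = 1)
    (hπstat : ∀ j, ∑' i, π i * P i j = π j)
    (hfin : ∀ j, meanHit P S j ≠ ⊤) :
    ∑' i : S, π (i : V) * returnTime P S i = 1 := by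
  have htend := u_tendsto P S π hπtop hπsum hfin
  have hc : ∑' n, c P S π n = u P S π 0 := by
    have h1 := ENNReal.tendsto_nat_tsum (c P S π)
    have h2 := h1.add htend
    have h3 : (fun N => (∑ n ∈ Finset.range N, c P S π n) + u P S π N)
        = fun _ => u P S π 0 := funext (sum_c P hst S π hπstat)
    have h4 := h3 ▸ h2
    have h5 := tendsto_nhds_unique h4 tendsto_const_nhds
    simpa using h5
  have hu0 : (∑' j : S, π (j : V)) + u P S π 0 = 1 := by
    have hsplit := Summable.tsum_add_tsum_compl (s := S) (f := π) ENNReal.summable ENNReal.summable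
    have hu0eq : u P S π 0 = ∑' j : ↥Sᶜ, π (j : V) := by
      have hS : ∑' j : S, π (j : V) * (1 - hitBy P S 0 (j : V)) = 0 :=
        ENNReal.tsum_eq_zero.mpr fun j => by
          rw [hitBy_of_mem P j.2, tsub_self, mul_zero]
      have hSc : ∑' j : ↥Sᶜ, π (j : V) * (1 - hitBy P S 0 (j : V)) = ∑' j : ↥Sᶜ, π (j : V) :=
        tsum_congr fun j => by
          simp only [hitBy, if_neg j.2, tsub_zero, mul_one]
      have h := (Summable.tsum_add_tsum_compl (s := S)
        (f := fun j => π j * (1 - hitBy P S 0 j)) ENNReal.summable ENNReal.summable).symm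
      rw [hS, zero_add, hSc] at h
      exact h
    rw [hu0eq, hsplit, hπsum]
  calc ∑' i : S, π (i : V) * returnTime P S i
      = ∑' i : S, (π (i : V) * 1 + π (i : V) * ∑' j, P (i : V) j * meanHit P S j) := by
        refine tsum_congr fun i => ?_
        rw [returnTime, mul_add]
    _ = (∑' i : S, π (i : V)) + ∑' i : S, π (i : V) * ∑' j, P (i : V) j * meanHit P S j := by
        rw [ENNReal.tsum_add]
        simp
    _ = (∑' i : S, π (i : V)) + ∑' n, c P S π n := by
        congr 1
        calc ∑' i : S, π (i : V) * ∑' j, P (i : V) j * meanHit P S j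
            = ∑' i : S, π (i : V) * ∑' j, ∑' n, P (i : V) j * (1 - hitBy P S n j) := by
              refine tsum_congr fun i => ?_
              congr 1
              refine tsum_congr fun j => ?_
              rw [meanHit, ENNReal.tsum_mul_left]
          _ = ∑' i : S, π (i : V) * ∑' n, ∑' j, P (i : V) j * (1 - hitBy P S n j) := by
              refine tsum_congr fun i => ?_
              rw [ENNReal.tsum_comm]
          _ = ∑' i : S, ∑' n, π (i : V) * ∑' j, P (i : V) j * (1 - hitBy P S n j) := by
              refine tsum_congr fun i => ?_
              rw [ENNReal.tsum_mul_left]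
          _ = ∑' n, ∑' i : S, π (i : V) * ∑' j, P (i : V) j * (1 - hitBy P S n j) :=
              ENNReal.tsum_comm
          _ = ∑' n, c P S π n := rfl
    _ = 1 := by rw [hc, hu0]

end KacAux

/-- **Kac's lemma.** For an irreducible positive-recurrent Markov chain with stationary
distribution `π`, the mean return time to a nonempty set `S`, namely
`τ_S = (∑_{i∈S} π_i τ⁺_{i→S}) / (∑_{i∈S} π_i)`, equals `1 / ∑_{i∈S} π_i`;
in particular `τ_i = 1/π_i`. -/
theorem kac_lemma {V : Type*} [Countable V]
    (P : V → V → ℝ≥0∞) (hst : ∀ i, ∑' j, P i j = 1)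
    (hirr : ∀ i j : V, Relation.ReflTransGen (fun a b => 0 < P a b) i j)
    (π : V → ℝ≥0∞) (hπpos : ∀ i, 0 < π i) (hπsum : ∑' i, π i = 1)
    (hπstat : ∀ j, ∑' i, π i * P i j = π j)
    (hposrec : ∀ i, returnTime P {i} i < ⊤) :
    (∀ S : Set V, S.Nonempty →
      (∑' i : S, π i * returnTime P S i) / (∑' i : S, π i) = 1 / ∑' i : S, π i) ∧
    (∀ i : V, returnTime P {i} i = 1 / π i) := by
  have hπtop : ∀ j, π j ≠ ⊤ := fun j =>
    ne_top_of_le_ne_top ENNReal.one_ne_top (hπsum ▸ ENNReal.le_tsum j)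
  have hfin : ∀ (S : Set V), S.Nonempty → ∀ j, meanHit P S j ≠ ⊤ := by
    rintro S ⟨i₀, hi₀⟩ j h
    exact KacAux.meanHit_single_ne_top P hst hirr hposrec i₀ j
      (top_le_iff.mp (h ▸ KacAux.meanHit_mono P hst (Set.singleton_subset_iff.mpr hi₀) j))
  constructor
  · intro S hS
    rw [KacAux.key_lemma P hst S π hπtop hπsum hπstat (hfin S hS)]
  · intro i
    have hkey := KacAux.key_lemma P hst {i} π hπtop hπsum hπstat
      (hfin {i} (Set.singleton_nonempty i))
    rw [tsum_singleton i (fun j => π j * returnTime P {i} j)] at hkey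
    rw [ENNReal.eq_div_iff (hπpos i).ne' (hπtop i)]
    exact hkey
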